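/- arXiv:1908.05921 — 3 statements merged into one kernel-verified Lean document; each statement's English description precedes it below -/
import Mathlib

section
/- Let U be a nontrivial uniform submodule of a left R-module M with a nonzero complement C contained in soc(M), and suppose C is the unique complement of U. If there exist a simple submodule F not contained in U, a nonzero f ∈ F, and a nonzero u ∈ U such that for all r ∈ R, ru = 0 implies rf = 0, then U has degree greater than 1 in the proper sum-essential graph N(M). -/
variable {R : Type*} [Ring R] {M : Type*} [AddCommGroup M] [Module R M]

/-- `N` is an essential submodule of `M`: it intersects every nonzero submodule nontrivially. -/
def IsEssentialSubmodule (N : Submodule R M) : Prop :=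
  ∀ B : Submodule R M, B ≠ ⊥ → N ⊓ B ≠ ⊥

/-- A vertex of the sum-essential graph `S(M)`: a nontrivial submodule. -/
def IsVertexS (N : Submodule R M) : Prop := N ≠ ⊥ ∧ N ≠ ⊤

/-- Adjacency in the sum-essential graph `S(M)`. -/
def AdjS (A B : Submodule R M) : Prop :=
  IsVertexS A ∧ IsVertexS B ∧ A ≠ B ∧ IsEssentialSubmodule (A ⊔ B)

/-- A vertex of the proper sum-essential graph `N(M)`: a nontrivial non-essential submodule. -/
def IsVertexP (N : Submodule R M) : Prop :=
  N ≠ ⊥ ∧ N ≠ ⊤ ∧ ¬ IsEssentialSubmodule N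

/-- Adjacency in the proper sum-essential graph `N(M)`. -/
def AdjP (A B : Submodule R M) : Prop :=
  IsVertexP A ∧ IsVertexP B ∧ A ≠ B ∧ IsEssentialSubmodule (A ⊔ B)

/-- `U` is a uniform submodule: nonzero, and any two nonzero submodules of it intersect. -/
def UniformSubmodule (U : Submodule R M) : Prop :=
  U ≠ ⊥ ∧ ∀ A B : Submodule R M, A ≤ U → B ≤ U → A ≠ ⊥ → B ≠ ⊥ → A ⊓ B ≠ ⊥

/-- `C` is a complement of `U` in `M`: maximal with respect to `U ⊓ C = ⊥`. -/
def IsComplementOf (C U : Submodule R M) : Prop :=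
  U ⊓ C = ⊥ ∧ ∀ D : Submodule R M, U ⊓ D = ⊥ → C ≤ D → D = C

/-- Any submodule meeting `A` trivially extends to a complement of `A` (Zorn). -/
lemma exists_complement_ext (A X : Submodule R M) (hAX : A ⊓ X = ⊥) :
    ∃ D : Submodule R M, X ≤ D ∧ IsComplementOf D A := by
  obtain ⟨m, hxm, hmem, hmax⟩ :=
    zorn_le_nonempty₀ {D : Submodule R M | A ⊓ D = ⊥}
      (fun c hc hchain y hy => by
        refine ⟨sSup c, ?_, fun z hz => le_sSup hz⟩
        rw [Set.mem_setOf_eq, eq_bot_iff]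
        rintro x ⟨hxA, hxS⟩
        obtain ⟨S, hSc, hxSm⟩ := (Submodule.mem_sSup_of_directed ⟨y, hy⟩
          (hchain.directedOn)).mp hxS
        have : x ∈ A ⊓ S := ⟨hxA, hxSm⟩
        rw [hc hSc] at this
        exact this) X hAX
  exact ⟨m, hxm, hmem, fun D hD hmD => (hmax hD hmD).antisymm hmD⟩

/-- The sup of a submodule with a complement of it is essential. -/
lemma sup_complement_essential (A D : Submodule R M) (h : IsComplementOf D A) :
    IsEssentialSubmodule (A ⊔ D) := by
  intro B hB heq
  apply hB
  have hADB : A ⊓ (D ⊔ B) = ⊥ := by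
    rw [eq_bot_iff]
    rintro x ⟨hxA, hxDB⟩
    obtain ⟨d, hd, b, hb, rfl⟩ := Submodule.mem_sup.mp hxDB
    have hbAD : b ∈ (A ⊔ D) ⊓ B := by
      refine ⟨?_, hb⟩
      have : (d + b) - d ∈ A ⊔ D :=
        sub_mem (Submodule.mem_sup_left hxA) (Submodule.mem_sup_right hd)
      simpa using this
    rw [heq] at hbAD
    have hb0 : b = 0 := hbAD
    have : d + b ∈ A ⊓ D := ⟨hxA, by simp [hb0, hd]⟩
    rw [h.1] at this
    exact this
  have hDB : D ⊔ B = D := h.2 (D ⊔ B) hADB le_sup_left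
  have hBle : B ≤ A ⊔ D := le_trans (le_sup_right.trans hDB.le) le_sup_right
  rw [eq_bot_iff]
  intro x hx
  have : x ∈ (A ⊔ D) ⊓ B := ⟨hBle hx, hx⟩
  rw [heq] at this
  exact this

/-- Essentiality is upward closed. -/
lemma essential_mono {N N' : Submodule R M} (h : IsEssentialSubmodule N) (hle : N ≤ N') :
    IsEssentialSubmodule N' := by
  intro B hB heq
  refine h B hB (le_bot_iff.mp ?_)
  calc N ⊓ B ≤ N' ⊓ B := inf_le_inf_right B hle
    _ = ⊥ := heq

/-- Let `U` be a nontrivial uniform submodule with a nonzero unique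
complement `C ⊆ soc(M)`. If there are a simple submodule `F ⊄ U`, nonzero `f ∈ F`
and nonzero `u ∈ U` with `r • u = 0 → r • f = 0` for all `r`, then `U` has degree
greater than 1 in `N(M)`. -/
theorem stmt12 (U C : Submodule R M) (hUnt : U ≠ ⊥ ∧ U ≠ ⊤)
    (hUu : UniformSubmodule U)
    (hC : IsComplementOf C U) (hC0 : C ≠ ⊥)
    (hCsoc : C ≤ sSup {S : Submodule R M | IsAtom S})
    (huniq : ∀ D : Submodule R M, IsComplementOf D U → D = C)
    (F : Submodule R M) (hF : IsAtom F) (hFU : ¬ F ≤ U)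
    (f : M) (hfF : f ∈ F) (hf0 : f ≠ 0)
    (u : M) (huU : u ∈ U) (hu0 : u ≠ 0)
    (hr : ∀ r : R, r • u = 0 → r • f = 0) :
    ∃ C₁ C₂ : Submodule R M, AdjP U C₁ ∧ AdjP U C₂ ∧ C₁ ≠ C₂ := by
  obtain ⟨hU0, hUtop⟩ := hUnt
  -- F meets U trivially
  have hUF : U ⊓ F = ⊥ := by
    rcases (hF.le_iff.mp inf_le_right) with h1 | h1
    · exact h1
    · exact absurd (h1 ▸ inf_le_left : F ≤ U) hFU
  -- F is contained in C
  have hFC : F ≤ C := by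
    obtain ⟨D, hFD, hDcomp⟩ := exists_complement_ext U F hUF
    exact (huniq D hDcomp) ▸ hFD
  -- the "graph" submodule T
  set T : Submodule R M := Submodule.span R {u - f} with hTdef
  have huf0 : u - f ≠ 0 := by
    intro h
    have huf : u = f := sub_eq_zero.mp h
    have : u ∈ U ⊓ F := ⟨huU, huf ▸ hfF⟩
    rw [hUF] at this
    exact hu0 this
  have hT0 : T ≠ ⊥ := by
    rw [hTdef, Ne, Submodule.span_singleton_eq_bot]
    exact huf0
  have hufmem : u - f ∈ T := Submodule.mem_span_singleton_self _
  -- T meets F trivially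
  have hTF : T ⊓ F = ⊥ := by
    rw [eq_bot_iff]
    rintro x ⟨hxT, hxF⟩
    obtain ⟨r, hrx⟩ := Submodule.mem_span_singleton.mp hxT
    rw [smul_sub] at hrx
    have hruF : r • u ∈ F := by
      have : x + r • f ∈ F := add_mem hxF (Submodule.smul_mem F r hfF)
      have hx' : r • u = x + r • f := by rw [← hrx]; abel
      rw [hx']; exact this
    have hru0 : r • u = 0 := by
      have : r • u ∈ U ⊓ F := ⟨Submodule.smul_mem U r huU, hruF⟩
      rw [hUF] at this; exact this
    have hrf0 : r • f = 0 := hr r hru0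
    rw [← hrx, hru0, hrf0, sub_zero]
    exact Submodule.zero_mem _
  -- a complement E of U ⊔ F
  obtain ⟨E, -, hE⟩ := exists_complement_ext (U ⊔ F) ⊥ (by simp)
  set C₂ : Submodule R M := T ⊔ E with hC2def
  have hTleUF : T ≤ U ⊔ F := by
    rw [hTdef, Submodule.span_singleton_le_iff_mem]
    exact sub_mem (Submodule.mem_sup_left huU) (Submodule.mem_sup_right hfF)
  -- C₂ meets F trivially
  have hC2F : C₂ ⊓ F = ⊥ := by
    rw [eq_bot_iff]
    rintro x ⟨hxC2, hxF⟩
    obtain ⟨t, ht, e, he, rfl⟩ := Submodule.mem_sup.mp hxC2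
    have heUF : e ∈ (U ⊔ F) ⊓ E := by
      refine ⟨?_, he⟩
      have : (t + e) - t ∈ U ⊔ F :=
        sub_mem (Submodule.mem_sup_right hxF) (hTleUF ht)
      simpa using this
    rw [hE.1] at heUF
    have he0 : e = 0 := heUF
    have : t + e ∈ T ⊓ F := ⟨by simp [he0, ht], hxF⟩
    rw [hTF] at this
    exact this
  -- f ∈ U ⊔ T, hence F ≤ U ⊔ T
  have hfUT : f ∈ U ⊔ T := by
    have : u - (u - f) ∈ U ⊔ T :=
      sub_mem (Submodule.mem_sup_left huU) (Submodule.mem_sup_right hufmem)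
    simpa using this
  have hFspan : F = Submodule.span R {f} := by
    rcases hF.le_iff.mp ((Submodule.span_singleton_le_iff_mem f F).mpr hfF) with h1 | h1
    · exact absurd (Submodule.span_singleton_eq_bot.mp h1) hf0
    · exact h1.symm
  have hFUT : F ≤ U ⊔ T := by
    rw [hFspan, Submodule.span_singleton_le_iff_mem]
    exact hfUT
  -- U is a vertex
  have hUvert : IsVertexP U := by
    refine ⟨hU0, hUtop, fun h => hC0 ?_⟩
    by_contra hC0'
    exact h C hC0' hC.1
  -- C is a vertex
  have hCvert : IsVertexP C := by
    refine ⟨hC0, fun h => hU0 ?_, fun h => hU0 ?_⟩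
    · rw [← hC.1, h, inf_top_eq]
    · have := h U hU0
      rw [inf_comm, hC.1] at this
      exact absurd rfl this
  -- C₂ is a vertex
  have hC2vert : IsVertexP C₂ := by
    refine ⟨fun h => hT0 ?_, fun h => hF.1 ?_, fun h => ?_⟩
    · exact le_bot_iff.mp (h ▸ (le_sup_left : T ≤ C₂))
    · rw [← hC2F, h, top_inf_eq]
    · exact h F hF.1 hC2F
  -- inequalities
  have hUC : U ≠ C := fun h => hU0 (by rw [← hC.1, ← h, inf_idem])
  have hUC2 : U ≠ C₂ := by
    intro h
    have hfU : f ∈ U := by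
      have : u - (u - f) ∈ U := sub_mem huU (h ▸ Submodule.mem_sup_left hufmem)
      simpa using this
    have : f ∈ U ⊓ F := ⟨hfU, hfF⟩
    rw [hUF] at this
    exact hf0 this
  have hCC2 : C ≠ C₂ := by
    intro h
    have : f ∈ C₂ ⊓ F := ⟨h ▸ hFC hfF, hfF⟩
    rw [hC2F] at this
    exact hf0 this
  -- essentiality of the sups
  have hess1 : IsEssentialSubmodule (U ⊔ C) := sup_complement_essential U C hC
  have hess2 : IsEssentialSubmodule (U ⊔ C₂) := by
    refine essential_mono (sup_complement_essential (U ⊔ F) E hE) ?_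
    rw [sup_le_iff, sup_le_iff]
    exact ⟨⟨le_sup_left, hFUT.trans (sup_le le_sup_left ((le_sup_left : T ≤ C₂).trans le_sup_right))⟩,
      (le_sup_right : E ≤ C₂).trans le_sup_right⟩
  exact ⟨C, C₂, ⟨hUvert, hCvert, hUC, hess1⟩, ⟨hUvert, hC2vert, hUC2, hess2⟩, hCC2⟩
end

section
/- Let U be a vertex of the proper sum-essential graph N(M). Then deg(U) = 1 if and only if: (i) U is uniform and its complement in M is unique and semisimple, and (ii) for every simple submodule F ⊄ U, every nonzero f ∈ F, and every nonzero u ∈ U, there exists r ∈ R with ru = 0 and rf ≠ 0. -/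
variable {R : Type*} [Ring R] {M : Type*} [AddCommGroup M] [Module R M]

section Helpers

/-- Essentiality is monotone. -/
lemma ess_mono {A B : Submodule R M} (h : A ≤ B) (hA : IsEssentialSubmodule A) :
    IsEssentialSubmodule B := by
  intro X hX hBX
  exact hA X hX (le_bot_iff.1 (hBX ▸ inf_le_inf_right X h))

/-- Any submodule disjoint from `U` is contained in a complement of `U`. -/
lemma exists_complementOf_ge (U E : Submodule R M) (hE : U ⊓ E = ⊥) :
    ∃ C, E ≤ C ∧ IsComplementOf C U := by
  have hchainub : ∀ c ⊆ {D : Submodule R M | U ⊓ D = ⊥}, IsChain (· ≤ ·) c →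
      ∀ y ∈ c, ∃ ub ∈ {D : Submodule R M | U ⊓ D = ⊥}, ∀ z ∈ c, z ≤ ub := by
    intro c hcs hchain y hy
    refine ⟨sSup c, ?_, fun z hz => le_sSup hz⟩
    rw [Set.mem_setOf_eq, Submodule.eq_bot_iff]
    intro x hx
    obtain ⟨hxU, hxs⟩ := Submodule.mem_inf.1 hx
    obtain ⟨N, hNc, hxN⟩ := (Submodule.mem_sSup_of_directed ⟨y, hy⟩ hchain.directedOn).1 hxs
    exact (Submodule.eq_bot_iff _).1 (hcs hNc) x (Submodule.mem_inf.2 ⟨hxU, hxN⟩)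
  obtain ⟨m, hEm, hm⟩ := zorn_le_nonempty₀ {D : Submodule R M | U ⊓ D = ⊥} hchainub E hE
  exact ⟨m, hEm, hm.1, fun D hD hmD => le_antisymm (hm.2 hD hmD) hmD⟩

/-- The sum of a submodule and any of its complements is essential. -/
lemma IsComplementOf.sup_essential {C U : Submodule R M} (h : IsComplementOf C U) :
    IsEssentialSubmodule (U ⊔ C) := by
  intro B hB hUB
  apply hB
  have hdisj : U ⊓ (C ⊔ B) = ⊥ := by
    rw [Submodule.eq_bot_iff]
    intro x hx
    obtain ⟨hxU, hxCB⟩ := Submodule.mem_inf.1 hx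
    obtain ⟨c, hc, b, hb, hcb⟩ := Submodule.mem_sup.1 hxCB
    have hbUC : b ∈ (U ⊔ C) ⊓ B := by
      refine Submodule.mem_inf.2 ⟨?_, hb⟩
      have : b = x - c := by rw [← hcb]; abel
      exact this ▸ sub_mem (Submodule.mem_sup_left hxU) (Submodule.mem_sup_right hc)
    have hb0 : b = 0 := by rwa [hUB, Submodule.mem_bot] at hbUC
    have hxc : x = c := by rw [← hcb, hb0, add_zero]
    have : x ∈ U ⊓ C := Submodule.mem_inf.2 ⟨hxU, hxc ▸ hc⟩
    rwa [h.1, Submodule.mem_bot] at this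
  have hBC : B ≤ C := le_sup_right.trans (h.2 (C ⊔ B) hdisj le_sup_left).le
  have : B ≤ (U ⊔ C) ⊓ B := le_inf (hBC.trans le_sup_right) le_rfl
  exact le_bot_iff.1 (hUB ▸ this)

/-- Every complement of a vertex `U` of `N(M)` is adjacent to `U`. -/
lemma adjP_of_complement {U C : Submodule R M} (hU : IsVertexP U) (hC : IsComplementOf C U) :
    AdjP U C := by
  have hCbot : C ≠ ⊥ := by
    intro h0
    apply hU.2.2
    intro B hB hUB
    exact hB ((hC.2 B hUB (h0 ▸ bot_le)).trans h0)
  have hCtop : C ≠ ⊤ := by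
    intro h0
    apply hU.1
    have := hC.1
    rwa [h0, inf_top_eq] at this
  have hCess : ¬ IsEssentialSubmodule C := by
    intro h
    exact h U hU.1 (by rw [inf_comm]; exact hC.1)
  have hUC : U ≠ C := by
    intro h0
    apply hU.1
    have := hC.1
    rwa [← h0, inf_idem] at this
  exact ⟨hU, ⟨hCbot, hCtop, hCess⟩, hUC, hC.sup_essential⟩

/-- If `U ⊓ C = ⊥`, `L` is essential in `C` and `U ⊔ C` is essential,
then `U ⊔ L` is essential. -/
lemma ess_sup_of_rel_ess {U C L : Submodule R M} (hUC : U ⊓ C = ⊥) (hL : L ≤ C)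
    (hLe : ∀ B, B ≤ C → B ≠ ⊥ → L ⊓ B ≠ ⊥)
    (hUCe : IsEssentialSubmodule (U ⊔ C)) : IsEssentialSubmodule (U ⊔ L) := by
  have key : ∀ B', B' ≤ U ⊔ C → B' ≠ ⊥ → (U ⊔ L) ⊓ B' ≠ ⊥ := by
    intro B' hB' hB'0 hcon
    by_cases hD0 : C ⊓ (U ⊔ B') = ⊥
    · apply hB'0
      rw [Submodule.eq_bot_iff]
      intro b hb
      obtain ⟨u, hu, c, hc, huc⟩ := Submodule.mem_sup.1 (hB' hb)
      have hcD : c ∈ C ⊓ (U ⊔ B') := by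
        refine Submodule.mem_inf.2 ⟨hc, ?_⟩
        have : c = b + -u := by rw [← huc]; abel
        exact this ▸ add_mem (Submodule.mem_sup_right hb) (Submodule.mem_sup_left (neg_mem hu))
      have hc0 : c = 0 := by rwa [hD0, Submodule.mem_bot] at hcD
      have hbU : b ∈ U := by rw [← huc, hc0, add_zero]; exact hu
      have : b ∈ (U ⊔ L) ⊓ B' := Submodule.mem_inf.2 ⟨Submodule.mem_sup_left hbU, hb⟩
      rwa [hcon, Submodule.mem_bot] at this
    · obtain ⟨l, hl, hl0⟩ := Submodule.exists_mem_ne_zero_of_ne_bot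
        (hLe (C ⊓ (U ⊔ B')) inf_le_left hD0)
      obtain ⟨hlL, hlC, hlUB⟩ := Submodule.mem_inf.1 hl |>.imp id (Submodule.mem_inf.1 ·)
      obtain ⟨a, ha, b, hb, hab⟩ := Submodule.mem_sup.1 hlUB
      have hbB : b ∈ (U ⊔ L) ⊓ B' := by
        refine Submodule.mem_inf.2 ⟨?_, hb⟩
        have : b = l + -a := by rw [← hab]; abel
        exact this ▸ add_mem (Submodule.mem_sup_right hlL) (Submodule.mem_sup_left (neg_mem ha))
      have hb0 : b = 0 := by rwa [hcon, Submodule.mem_bot] at hbB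
      have hlU : l ∈ U ⊓ C := by
        refine Submodule.mem_inf.2 ⟨?_, hlC⟩
        rw [← hab, hb0, add_zero]; exact ha
      rw [hUC, Submodule.mem_bot] at hlU
      exact hl0 hlU
  intro B hB0 hcon
  have h1 : (U ⊔ C) ⊓ B ≠ ⊥ := hUCe B hB0
  apply key ((U ⊔ C) ⊓ B) inf_le_left h1
  rw [eq_bot_iff, ← hcon]
  exact le_inf inf_le_left (inf_le_right.trans inf_le_right)

/-- A module with no proper essential submodule is semisimple. -/
lemma semisimple_of_no_proper_essential {N : Type*} [AddCommGroup N] [Module R N]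
    (h : ∀ L : Submodule R N, IsEssentialSubmodule L → L = ⊤) : IsSemisimpleModule R N := by
  refine (isSemisimpleModule_iff _ _).2 ⟨?_⟩
  intro A
  obtain ⟨C, -, hC⟩ := exists_complementOf_ge A ⊥ (by simp)
  exact ⟨C, disjoint_iff.2 hC.1, codisjoint_iff.2 (h _ hC.sup_essential)⟩

lemma map_comap_subtype_self {C : Submodule R M} {F : Submodule R M} (hF : F ≤ C) :
    (F.comap C.subtype).map C.subtype = F := by
  rw [Submodule.map_comap_subtype]
  exact inf_eq_right.2 hF

/-- In a semisimple submodule `C`, every submodule has a relative complement. -/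
lemma semisimple_rel_compl {C : Submodule R M} (h : IsSemisimpleModule R ↥C)
    {F : Submodule R M} (hF : F ≤ C) : ∃ G, G ≤ C ∧ F ⊓ G = ⊥ ∧ F ⊔ G = C := by
  obtain ⟨G', hG'⟩ := exists_isCompl (F.comap C.subtype)
  refine ⟨G'.map C.subtype, Submodule.map_subtype_le _ _, ?_, ?_⟩
  · rw [← map_comap_subtype_self hF,
      ← Submodule.map_inf _ (Submodule.injective_subtype C), hG'.inf_eq_bot,
      Submodule.map_bot]
  · rw [← map_comap_subtype_self hF, ← Submodule.map_sup, hG'.sup_eq_top,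
      Submodule.map_top, Submodule.range_subtype]

/-- A nonzero submodule of a semisimple submodule contains an atom. -/
lemma semisimple_exists_atom_le {C : Submodule R M} (h : IsSemisimpleModule R ↥C)
    {B : Submodule R M} (hB : B ≤ C) (hB0 : B ≠ ⊥) : ∃ F, F ≤ B ∧ IsAtom F := by
  haveI := h
  obtain h0 | ⟨m, hmB, hm⟩ := IsSemisimpleModule.eq_bot_or_exists_simple_le (B.comap C.subtype)
  · exact absurd (by rw [← map_comap_subtype_self hB, h0, Submodule.map_bot]) hB0
  · have hatom : IsAtom m := isSimpleModule_iff_isAtom.mp hm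
    have hinj := Submodule.injective_subtype C
    refine ⟨m.map C.subtype, le_trans (Submodule.map_mono hmB)
      (map_comap_subtype_self hB).le, ?_, ?_⟩
    · intro h0
      exact hatom.1 (Submodule.map_injective_of_injective hinj
        (by rw [h0, Submodule.map_bot]))
    · intro G hG
      have hGC : G ≤ C := hG.le.trans (Submodule.map_subtype_le _ _)
      have hGm : G.comap C.subtype ≤ m := by
        have := Submodule.comap_mono (f := C.subtype) hG.le
        rwa [Submodule.comap_map_eq, Submodule.ker_subtype, sup_bot_eq] at this
      have hne : G.comap C.subtype ≠ m := by
        intro h0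
        exact hG.ne (by rw [← map_comap_subtype_self hGC, h0])
      have : G.comap C.subtype = ⊥ := hatom.2 _ (lt_of_le_of_ne hGm hne)
      rw [← map_comap_subtype_self hGC, this, Submodule.map_bot]

/-- If every relatively essential submodule of `C` equals `C`, then `C` is semisimple. -/
lemma semisimple_of_rel_no_proper_essential {C : Submodule R M}
    (h : ∀ L, L ≤ C → (∀ B, B ≤ C → B ≠ ⊥ → L ⊓ B ≠ ⊥) → L = C) :
    IsSemisimpleModule R ↥C := by
  apply semisimple_of_no_proper_essential
  intro L' hL'
  have hinj := Submodule.injective_subtype C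
  have hL : L'.map C.subtype = C := by
    apply h _ (Submodule.map_subtype_le _ _)
    intro B hB hB0 hcon
    have hB' : B.comap C.subtype ≠ ⊥ := by
      intro h0
      exact hB0 (by rw [← map_comap_subtype_self hB, h0, Submodule.map_bot])
    apply hL' (B.comap C.subtype) hB'
    apply Submodule.map_injective_of_injective hinj
    rw [Submodule.map_inf _ hinj, map_comap_subtype_self hB, hcon, Submodule.map_bot]
  apply Submodule.map_injective_of_injective hinj
  rw [hL, Submodule.map_top, Submodule.range_subtype]

end Helpers

/-- A vertex `U` of `N(M)` has degree 1 iff (i) `U` is uniform and its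
complement in `M` is unique and semisimple, and (ii) for every simple submodule
`F ⊄ U`, every nonzero `f ∈ F` and every nonzero `u ∈ U` there is `r ∈ R` with
`r • u = 0` and `r • f ≠ 0`. -/
theorem stmt13 (U : Submodule R M) (hU : IsVertexP U) :
    (∃! C, AdjP U C) ↔
      ((UniformSubmodule U ∧ (∃! C, IsComplementOf C U) ∧
          (∀ C : Submodule R M, IsComplementOf C U → IsSemisimpleModule R ↥C)) ∧
       (∀ F : Submodule R M, IsAtom F → ¬ F ≤ U →
          ∀ f ∈ F, f ≠ 0 → ∀ u ∈ U, u ≠ 0 →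
            ∃ r : R, r • u = 0 ∧ r • f ≠ 0)) := by
  constructor
  · rintro ⟨X₀, hX₀, huniq⟩
    obtain ⟨C₀, -, hC₀⟩ := exists_complementOf_ge U ⊥ (by simp)
    have hC₀adj : AdjP U C₀ := adjP_of_complement hU hC₀
    have huniq' : ∀ Y, AdjP U Y → Y = C₀ := by
      intro Y hY
      rw [huniq Y hY, ← huniq C₀ hC₀adj]
    have hC₀bot : C₀ ≠ ⊥ := hC₀adj.2.1.1
    have hUC₀ : U ⊓ C₀ = ⊥ := hC₀.1
    have hdisj_le : ∀ E : Submodule R M, U ⊓ E = ⊥ → E ≤ C₀ := by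
      intro E hE
      obtain ⟨C', hEC', hC'⟩ := exists_complementOf_ge U E hE
      exact (huniq' C' (adjP_of_complement hU hC')) ▸ hEC'
    -- Uniformity
    have huni : UniformSubmodule U := by
      refine ⟨hU.1, ?_⟩
      intro A B hAU hBU hA0 hB0 hAB
      have hYB : (C₀ ⊔ A) ⊓ B = ⊥ := by
        rw [Submodule.eq_bot_iff]
        intro y hy
        obtain ⟨hyCA, hyB⟩ := Submodule.mem_inf.1 hy
        obtain ⟨c, hc, a, ha, hca⟩ := Submodule.mem_sup.1 hyCA
        have hcU : c ∈ U ⊓ C₀ := by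
          refine Submodule.mem_inf.2 ⟨?_, hc⟩
          have : c = y + -a := by rw [← hca]; abel
          exact this ▸ add_mem (hBU hyB) (neg_mem (hAU ha))
        rw [hUC₀, Submodule.mem_bot] at hcU
        have : y ∈ A ⊓ B := Submodule.mem_inf.2 ⟨by rw [← hca, hcU, zero_add]; exact ha, hyB⟩
        rwa [hAB, Submodule.mem_bot] at this
      have hYadj : AdjP U (C₀ ⊔ A) := by
        refine ⟨hU, ⟨?_, ?_, ?_⟩, ?_, ?_⟩
        · intro h0
          exact hC₀bot (le_bot_iff.1 (h0 ▸ (le_sup_left : C₀ ≤ C₀ ⊔ A)))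
        · intro h0
          rw [h0, top_inf_eq] at hYB
          exact hB0 hYB
        · intro hess
          exact hess B hB0 hYB
        · intro h0
          apply hC₀bot
          have hCU : C₀ ≤ U := h0 ▸ (le_sup_left : C₀ ≤ C₀ ⊔ A)
          exact le_bot_iff.1 (hUC₀ ▸ le_inf hCU le_rfl)
        · have heq : U ⊔ (C₀ ⊔ A) = U ⊔ C₀ := by
            rw [sup_comm C₀ A, ← sup_assoc, sup_eq_left.mpr hAU]
          rw [heq]
          exact hC₀.sup_essential
      have hAC₀ : A ≤ C₀ := le_sup_right.trans (huniq' _ hYadj).le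
      exact hA0 (le_bot_iff.1 (hUC₀ ▸ le_inf hAU hAC₀))
    -- semisimplicity of all complements
    have hss : ∀ C : Submodule R M, IsComplementOf C U → IsSemisimpleModule R ↥C := by
      intro C hC
      have hCC₀ : C = C₀ := huniq' C (adjP_of_complement hU hC)
      apply semisimple_of_rel_no_proper_essential
      intro L hLC hLe
      have hCbot : C ≠ ⊥ := hCC₀ ▸ hC₀bot
      have hL0 : L ≠ ⊥ := by
        intro h0
        exact hLe C le_rfl hCbot (by rw [h0, bot_inf_eq])
      have hLU : U ⊓ L = ⊥ := le_bot_iff.1 (hC.1 ▸ inf_le_inf_left U hLC)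
      have hLadj : AdjP U L := by
        refine ⟨hU, ⟨hL0, ?_, ?_⟩, ?_, ?_⟩
        · intro h0
          rw [h0, inf_top_eq] at hLU
          exact hU.1 hLU
        · intro hess
          exact hess U hU.1 (by rwa [inf_comm] at hLU)
        · intro h0
          apply hU.1
          rwa [← h0, inf_idem] at hLU
        · exact ess_sup_of_rel_ess hC.1 hLC hLe hC.sup_essential
      rw [huniq' L hLadj, hCC₀]
    refine ⟨⟨huni, ⟨C₀, hC₀, fun C' hC' => huniq' C' (adjP_of_complement hU hC')⟩, hss⟩, ?_⟩
    -- condition (ii)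
    intro F hF hFU f hfF hf0 u huU hu0
    by_contra hcon
    push_neg at hcon
    have hUF : U ⊓ F = ⊥ := by
      have h1 : F ⊓ U ≠ F := fun h0 => hFU (h0 ▸ inf_le_right)
      have h2 : F ⊓ U = ⊥ := hF.2 _ (lt_of_le_of_ne inf_le_left h1)
      rwa [inf_comm] at h2
    have hFC : F ≤ C₀ := hdisj_le F hUF
    obtain ⟨G, hGC, hFG, hFGC⟩ := semisimple_rel_compl (hss C₀ hC₀) hFC
    set X := (R ∙ (u + f)) ⊔ G with hXdef
    have hufX : u + f ∈ X := Submodule.mem_sup_left (Submodule.mem_span_singleton_self _)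
    have huf0 : u + f ≠ 0 := by
      intro h0
      have hfU : f ∈ U := by
        have : f = -u := by rw [eq_neg_iff_add_eq_zero, add_comm]; exact h0
        exact this ▸ neg_mem huU
      have : f ∈ U ⊓ F := Submodule.mem_inf.2 ⟨hfU, hfF⟩
      rw [hUF, Submodule.mem_bot] at this
      exact hf0 this
    have hXF : X ⊓ F = ⊥ := by
      rw [Submodule.eq_bot_iff]
      intro y hy
      obtain ⟨hyX, hyF⟩ := Submodule.mem_inf.1 hy
      obtain ⟨s, hs, g, hg, hsg⟩ := Submodule.mem_sup.1 hyX
      obtain ⟨r, hr⟩ := Submodule.mem_span_singleton.1 hs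
      have hruU : r • u ∈ U ⊓ C₀ := by
        refine Submodule.mem_inf.2 ⟨Submodule.smul_mem _ r huU, ?_⟩
        have : r • u = y + -(r • f) + -g := by
          rw [← hsg, ← hr, smul_add]; abel
        exact this ▸ add_mem (add_mem (hFC hyF)
          (neg_mem (hFC (Submodule.smul_mem _ r hfF)))) (neg_mem (hGC hg))
      rw [hUC₀, Submodule.mem_bot] at hruU
      have hrf0 : r • f = 0 := hcon r hruU
      have hy_eq : y = g := by
        rw [← hsg, ← hr, smul_add, hruU, hrf0, zero_add, zero_add]
      have : y ∈ F ⊓ G := Submodule.mem_inf.2 ⟨hyF, hy_eq ▸ hg⟩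
      rwa [hFG, Submodule.mem_bot] at this
    have hFbot : F ≠ ⊥ := hF.1
    have hfUX : f ∈ U ⊔ X := by
      have : f = (u + f) + -u := by abel
      exact this ▸ add_mem (Submodule.mem_sup_right hufX) (Submodule.mem_sup_left (neg_mem huU))
    have hFle : F ≤ U ⊔ X := by
      have hspan : (R ∙ f) = F := by
        have h1 : (R ∙ f) ≤ F := (Submodule.span_singleton_le_iff_mem f F).2 hfF
        have h2 : (R ∙ f) ≠ ⊥ := fun h0 => hf0 (Submodule.span_singleton_eq_bot.1 h0)
        exact ((hF.le_iff.mp h1).resolve_left h2)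
      rw [← hspan]
      exact (Submodule.span_singleton_le_iff_mem _ _).2 hfUX
    have hXadj : AdjP U X := by
      refine ⟨hU, ⟨?_, ?_, ?_⟩, ?_, ?_⟩
      · intro h0
        exact huf0 (by rwa [h0, Submodule.mem_bot] at hufX)
      · intro h0
        rw [h0, top_inf_eq] at hXF
        exact hFbot hXF
      · intro hess
        exact hess F hFbot hXF
      · intro h0
        have hfU : f ∈ U := by
          have : f = (u + f) + -u := by abel
          rw [this]
          exact add_mem (h0 ▸ hufX) (neg_mem huU)
        have : f ∈ U ⊓ F := Submodule.mem_inf.2 ⟨hfU, hfF⟩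
        rw [hUF, Submodule.mem_bot] at this
        exact hf0 this
      · apply ess_mono _ hC₀.sup_essential
        refine sup_le le_sup_left ?_
        rw [← hFGC]
        exact sup_le hFle (le_sup_right.trans le_sup_right)
    have hXC₀ : X = C₀ := huniq' X hXadj
    have hufC₀ : u + f ∈ C₀ := hXC₀ ▸ hufX
    have huC₀ : u ∈ C₀ := by
      have : u = (u + f) + -f := by abel
      exact this ▸ add_mem hufC₀ (neg_mem (hFC hfF))
    have : u ∈ U ⊓ C₀ := Submodule.mem_inf.2 ⟨huU, huC₀⟩
    rw [hUC₀, Submodule.mem_bot] at this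
    exact hu0 this
  · rintro ⟨⟨huni, ⟨C₀, hC₀, hC₀uniq⟩, hss⟩, hann⟩
    have hC₀adj : AdjP U C₀ := adjP_of_complement hU hC₀
    have hssC₀ : IsSemisimpleModule R ↥C₀ := hss C₀ hC₀
    have hUC₀ : U ⊓ C₀ = ⊥ := hC₀.1
    refine ⟨C₀, hC₀adj, ?_⟩
    intro X hX
    obtain ⟨-, hXv, hXne, hXess⟩ := hX
    by_cases hXU : X ⊓ U = ⊥
    · -- X is disjoint from U, hence an essential submodule of C₀, hence equals C₀
      obtain ⟨C', hXC', hC'⟩ := exists_complementOf_ge U X (by rwa [inf_comm] at hXU)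
      have hXC₀ : X ≤ C₀ := (hC₀uniq C' hC') ▸ hXC'
      have hrel : ∀ B, B ≤ C₀ → B ≠ ⊥ → X ⊓ B ≠ ⊥ := by
        intro B hB hB0 hcon
        obtain ⟨y, hy, hy0⟩ := Submodule.exists_mem_ne_zero_of_ne_bot (hXess B hB0)
        obtain ⟨hyUX, hyB⟩ := Submodule.mem_inf.1 hy
        obtain ⟨a, ha, x, hx, hax⟩ := Submodule.mem_sup.1 hyUX
        have haU : a ∈ U ⊓ C₀ := by
          refine Submodule.mem_inf.2 ⟨ha, ?_⟩
          have : a = y + -x := by rw [← hax]; abel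
          exact this ▸ add_mem (hB hyB) (neg_mem (hXC₀ hx))
        rw [hUC₀, Submodule.mem_bot] at haU
        have : y ∈ X ⊓ B := Submodule.mem_inf.2 ⟨by rw [← hax, haU, zero_add]; exact hx, hyB⟩
        rw [hcon, Submodule.mem_bot] at this
        exact hy0 this
      obtain ⟨G, hGC, hXG, hXGC⟩ := semisimple_rel_compl hssC₀ hXC₀
      have hG0 : G = ⊥ := by
        by_contra hG0
        exact hrel G hGC hG0 hXG
      rw [← hXGC, hG0, sup_bot_eq]
    · -- X meets U: contradiction with (ii)
      exfalso
      have hXne : ¬ IsEssentialSubmodule X := hXv.2.2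
      simp only [IsEssentialSubmodule, not_forall] at hXne
      obtain ⟨B, hB0, hXB⟩ := hXne
      rw [not_not] at hXB
      have hBU : B ⊓ U = ⊥ := by
        by_contra hBU0
        apply huni.2 (B ⊓ U) (X ⊓ U) inf_le_right inf_le_right hBU0 hXU
        rw [eq_bot_iff, ← hXB]
        exact le_inf (inf_le_right.trans inf_le_left) (inf_le_left.trans inf_le_left)
      have hBC₀ : B ≤ C₀ := by
        obtain ⟨C', hBC', hC'⟩ := exists_complementOf_ge U B (by rwa [inf_comm] at hBU)
        exact (hC₀uniq C' hC') ▸ hBC'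
      obtain ⟨F, hFB, hFatom⟩ := semisimple_exists_atom_le hssC₀ hBC₀ hB0
      have hFX : F ⊓ X = ⊥ := by
        rw [eq_bot_iff, ← hXB]
        exact le_inf inf_le_right (inf_le_left.trans hFB)
      have hFU : F ⊓ U = ⊥ := by
        rw [eq_bot_iff, ← hBU]
        exact le_inf (inf_le_left.trans hFB) inf_le_right
      have hFnotU : ¬ F ≤ U := by
        intro h0
        exact hFatom.1 (by rw [← hFU]; exact (inf_eq_left.2 h0).symm)
      obtain ⟨y, hy, hy0⟩ := Submodule.exists_mem_ne_zero_of_ne_bot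
        (hXess F hFatom.1)
      obtain ⟨hyUX, hyF⟩ := Submodule.mem_inf.1 hy
      obtain ⟨a, ha, x, hx, hax⟩ := Submodule.mem_sup.1 hyUX
      have ha0 : a ≠ 0 := by
        intro h0
        rw [h0, zero_add] at hax
        have : y ∈ F ⊓ X := Submodule.mem_inf.2 ⟨hyF, hax ▸ hx⟩
        rw [hFX, Submodule.mem_bot] at this
        exact hy0 this
      obtain ⟨r, hru, hrf⟩ := hann F hFatom hFnotU y hyF hy0 a ha ha0
      apply hrf
      have hryX : r • y ∈ X := by
        have : r • y = r • x := by rw [← hax, smul_add, hru, zero_add]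
        exact this ▸ Submodule.smul_mem _ r hx
      have : r • y ∈ F ⊓ X := Submodule.mem_inf.2 ⟨Submodule.smul_mem _ r hyF, hryX⟩
      rwa [hFX, Submodule.mem_bot] at this
end

section
/- Let M be a nonzero nonsimple module and k a natural number. The sum-essential graph S(M) is k-regular (every vertex has degree exactly k) if and only if S(M) is a complete graph on k + 1 vertices. -/
variable {R : Type*} [Ring R] {M : Type*} [AddCommGroup M] [Module R M]

lemma ess_mono_s17 {N N' : Submodule R M} (h : N ≤ N') (hN : IsEssentialSubmodule N) :
    IsEssentialSubmodule N' := fun B hB hb => hN B hB (by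
  rw [← le_bot_iff] at hb ⊢; exact le_trans (inf_le_inf_right B h) hb)

lemma ess_top : IsEssentialSubmodule (⊤ : Submodule R M) := fun B hB => by simpa using hB

/-- Every submodule has a "complement" whose join with it is essential. -/
lemma exists_complement (A : Submodule R M) :
    ∃ C : Submodule R M, A ⊓ C = ⊥ ∧ IsEssentialSubmodule (A ⊔ C) := by
  have hside : ∀ c ⊆ {C : Submodule R M | A ⊓ C = ⊥}, IsChain (· ≤ ·) c →
      ∃ ub ∈ {C : Submodule R M | A ⊓ C = ⊥}, ∀ z ∈ c, z ≤ ub := by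
    intro c hc hchain
    rcases c.eq_empty_or_nonempty with rfl | hne
    · exact ⟨⊥, by simp, by simp⟩
    refine ⟨sSup c, ?_, fun z hz => le_sSup hz⟩
    rw [Set.mem_setOf_eq, eq_bot_iff]
    intro x hx
    simp only [SetLike.mem_coe, Submodule.mem_inf] at hx
    obtain ⟨hxA, hxS⟩ := hx
    have hdir : DirectedOn (· ≤ ·) c := hchain.directedOn
    rw [Submodule.mem_sSup_of_directed hne hdir] at hxS
    obtain ⟨D, hDc, hxD⟩ := hxS
    have : x ∈ A ⊓ D := ⟨hxA, hxD⟩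
    rw [hc hDc] at this
    simpa using this
  obtain ⟨C, hCmem, hCmax⟩ := zorn_le₀ {C : Submodule R M | A ⊓ C = ⊥} hside
  refine ⟨C, hCmem, ?_⟩
  intro B hB hcontra
  -- show A ⊓ (C ⊔ B) = ⊥
  have hinf : A ⊓ (C ⊔ B) = ⊥ := by
    rw [eq_bot_iff]
    intro x hx
    simp only [SetLike.mem_coe, Submodule.mem_inf, Submodule.mem_sup] at hx
    obtain ⟨hxA, c, hc, b, hb, rfl⟩ := hx
    have hbmem : b ∈ (A ⊔ C) ⊓ B := by
      refine ⟨?_, hb⟩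
      have : b = (c + b) - c := by abel
      rw [this]
      exact sub_mem (Submodule.mem_sup_left hxA) (Submodule.mem_sup_right hc)
    rw [hcontra] at hbmem
    simp only [Submodule.mem_bot] at hbmem
    subst hbmem
    have : c ∈ A ⊓ C := ⟨by simpa using hxA, hc⟩
    rw [hCmem] at this
    simpa using this
  have hBC : B ≤ C := le_sup_right.trans (hCmax hinf le_sup_left)
  apply hB
  rw [eq_bot_iff, ← hcontra]
  exact le_inf (hBC.trans le_sup_right) le_rfl

/-- For a nonzero nonsimple module `M` and `k : ℕ`, the graph `S(M)`
is `k`-regular iff it is a complete graph on `k + 1` vertices. -/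
theorem stmt17 (hnt : Nontrivial M) (hns : ¬ IsSimpleModule R M)
    (h2 : ∃ A B : Submodule R M, IsVertexS A ∧ IsVertexS B ∧ A ≠ B) (k : ℕ) :
    (∀ A : Submodule R M, IsVertexS A →
        {C | AdjS A C}.Finite ∧ {C | AdjS A C}.ncard = k) ↔
      ((∀ A B : Submodule R M, IsVertexS A → IsVertexS B → A ≠ B → AdjS A B) ∧
        {N : Submodule R M | IsVertexS N}.Finite ∧
        {N : Submodule R M | IsVertexS N}.ncard = k + 1) := by
  constructor
  · intro reg
    have key : ∀ A B : Submodule R M, IsVertexS A → IsVertexS B → A ≠ B → AdjS A B := by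
      by_cases hE : ∃ E : Submodule R M, IsVertexS E ∧ IsEssentialSubmodule E
      · obtain ⟨E, hEv, hEe⟩ := hE
        obtain ⟨hEfin, hEcard⟩ := reg E hEv
        have hVeq : {N : Submodule R M | IsVertexS N} = insert E {C | AdjS E C} := by
          ext B
          simp only [Set.mem_setOf_eq, Set.mem_insert_iff]
          constructor
          · intro hB
            by_cases hBE : B = E
            · exact Or.inl hBE
            · exact Or.inr ⟨hEv, hB, fun h => hBE h.symm, ess_mono_s17 le_sup_left hEe⟩
          · rintro (rfl | hB)
            · exact hEv
            · exact hB.2.1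
        have hVfin : {N : Submodule R M | IsVertexS N}.Finite := by
          rw [hVeq]; exact hEfin.insert E
        have hEnot : E ∉ {C | AdjS E C} := fun h => h.2.2.1 rfl
        have hVcard : {N : Submodule R M | IsVertexS N}.ncard = k + 1 := by
          rw [hVeq, Set.ncard_insert_of_notMem hEnot hEfin, hEcard]
        intro A B hA hB hAB
        obtain ⟨hAfin, hAcard⟩ := reg A hA
        have hsub : {C | AdjS A C} ⊆ {N : Submodule R M | IsVertexS N} \ {A} :=
          fun C hC => ⟨hC.2.1, fun h => hC.2.2.1 ((Set.mem_singleton_iff.mp h).symm)⟩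
        have hdfin : ({N : Submodule R M | IsVertexS N} \ {A}).Finite := hVfin.diff
        have hdcard : ({N : Submodule R M | IsVertexS N} \ {A}).ncard = k := by
          rw [Set.ncard_diff_singleton_of_mem (show A ∈ {N : Submodule R M | IsVertexS N} from hA), hVcard]
          simp
        have heq := Set.eq_of_subset_of_ncard_le hsub (by rw [hdcard, hAcard]) hdfin
        have hBmem : B ∈ {C | AdjS A C} := by
          rw [heq]
          exact ⟨hB, fun h => hAB (Set.mem_singleton_iff.mp h).symm⟩
        exact hBmem
      · push_neg at hE
        have topof : ∀ X : Submodule R M, X ≠ ⊥ → IsEssentialSubmodule X → X = ⊤ := by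
          intro X hX0 hXe
          by_contra hXt
          exact hE X ⟨hX0, hXt⟩ hXe
        have nolt : ∀ A B : Submodule R M, IsVertexS A → IsVertexS B → B < A → False := by
          intro A B hA hB hBA
          obtain ⟨C, hACbot, hACess⟩ := exists_complement A
          have hsupne : A ⊔ C ≠ ⊥ := fun h => hA.1 (le_bot_iff.mp (h ▸ le_sup_left))
          have hACtop : A ⊔ C = ⊤ := topof _ hsupne hACess
          have hC0 : C ≠ ⊥ := by
            rintro rfl
            exact hA.2 (by simpa using hACtop)
          have hCtop : C ≠ ⊤ := by
            rintro rfl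
            exact hA.1 (by simpa using hACbot)
          have hCv : IsVertexS C := ⟨hC0, hCtop⟩
          have hCA : A ≠ C := by
            rintro rfl
            exact hA.1 (by simpa using hACbot)
          have adjAC : AdjS A C := ⟨hA, hCv, hCA, hACess⟩
          obtain ⟨hAfin, hAcard⟩ := reg A hA
          obtain ⟨hBfin, hBcard⟩ := reg B hB
          have hsub : {D | AdjS B D} ⊆ {D | AdjS A D} := by
            intro D hD
            have hBD0 : B ⊔ D ≠ ⊥ := fun h => hB.1 (le_bot_iff.mp (h ▸ le_sup_left))
            have hBDtop : B ⊔ D = ⊤ := topof _ hBD0 hD.2.2.2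
            have hDA : D ≠ A := by
              rintro rfl
              have : B ⊔ D = D := sup_eq_right.mpr hBA.le
              exact hD.2.1.2 (by rw [← this, hBDtop])
            have hADtop : A ⊔ D = ⊤ :=
              top_le_iff.mp (hBDtop ▸ sup_le_sup_right hBA.le D)
            exact ⟨hA, hD.2.1, Ne.symm hDA, by rw [hADtop]; exact ess_top⟩
          have heq := Set.eq_of_subset_of_ncard_le hsub (by rw [hAcard, hBcard]) hAfin
          have hCB : C ∈ {D | AdjS B D} := by rw [heq]; exact adjAC
          have hBC0 : B ⊔ C ≠ ⊥ := fun h => hB.1 (le_bot_iff.mp (h ▸ le_sup_left))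
          have hBCtop : B ⊔ C = ⊤ := topof _ hBC0 hCB.2.2.2
          have hAB : A ≤ B := by
            intro x hx
            have hxBC : x ∈ B ⊔ C := by rw [hBCtop]; exact Submodule.mem_top
            rw [Submodule.mem_sup] at hxBC
            obtain ⟨b, hb, c, hc, rfl⟩ := hxBC
            have hcA : c ∈ A := by
              have : c = (b + c) - b := by abel
              rw [this]
              exact sub_mem hx (hBA.le hb)
            have : c ∈ A ⊓ C := ⟨hcA, hc⟩
            rw [hACbot] at this
            simp only [Submodule.mem_bot] at this
            subst this
            simpa using hb
          exact hBA.not_ge hAB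
        intro A B hA hB hAB
        have hABtop : A ⊔ B = ⊤ := by
          by_contra h
          have hAB0 : A ⊔ B ≠ ⊥ := fun h' => hA.1 (le_bot_iff.mp (h' ▸ le_sup_left))
          have hv : IsVertexS (A ⊔ B) := ⟨hAB0, h⟩
          rcases eq_or_lt_of_le (le_sup_left : A ≤ A ⊔ B) with heq | hlt
          · exact nolt A B hA hB (lt_of_le_of_ne (le_sup_right.trans heq.ge) (Ne.symm hAB))
          · exact nolt (A ⊔ B) A hv hA hlt
        exact ⟨hA, hB, hAB, by rw [hABtop]; exact ess_top⟩
    obtain ⟨A₀, B₀, hA₀, _, _⟩ := h2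
    obtain ⟨hfin, hcard⟩ := reg A₀ hA₀
    have hVeq : {N : Submodule R M | IsVertexS N} = insert A₀ {C | AdjS A₀ C} := by
      ext N
      simp only [Set.mem_setOf_eq, Set.mem_insert_iff]
      constructor
      · intro hN
        by_cases h : N = A₀
        · exact Or.inl h
        · exact Or.inr (key A₀ N hA₀ hN (Ne.symm h))
      · rintro (rfl | h)
        · exact hA₀
        · exact h.2.1
    have hnotmem : A₀ ∉ {C | AdjS A₀ C} := fun h => h.2.2.1 rfl
    refine ⟨key, ?_, ?_⟩
    · rw [hVeq]; exact hfin.insert A₀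
    · rw [hVeq, Set.ncard_insert_of_notMem hnotmem hfin, hcard]
  · rintro ⟨comp, fin, card⟩ A hA
    have hAV : A ∈ {N : Submodule R M | IsVertexS N} := hA
    have heq : {C | AdjS A C} = {N : Submodule R M | IsVertexS N} \ {A} := by
      ext C
      simp only [Set.mem_setOf_eq, Set.mem_diff, Set.mem_singleton_iff]
      constructor
      · exact fun h => ⟨h.2.1, fun hc => h.2.2.1 hc.symm⟩
      · rintro ⟨h1, h2⟩
        exact comp A C hA h1 fun hc => h2 hc.symm
    rw [heq]
    refine ⟨fin.diff, ?_⟩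
    rw [Set.ncard_diff_singleton_of_mem hAV, card]
    simp
end
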